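/- Let a, b ∈ ℝ with a ≠ 0 and a² + b² = 1, and define f : ℝ × (0, π) → ℝ³ by f(ζ, ξ) = ( a cos ζ sin ξ, a sin ζ sin ξ, a (cos ξ + log (tan (ξ/2))) + b ζ ). Then at every point (ζ, ξ) with cos ξ ≠ 0 the partial derivatives f_ζ and f_ξ are linearly independent, and, setting N := (f_ζ × f_ξ)/|f_ζ × f_ξ|, the Gauss curvature ( ⟨f_ζζ, N⟩·⟨f_ξξ, N⟩ − ⟨f_ζξ, N⟩² ) / ( |f_ζ|²·|f_ξ|² − ⟨f_ζ, f_ξ⟩² ) equals −1 there. -/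

import Mathlib

open Matrix

noncomputable section

/-- Partial derivative in the first (`ζ`) direction. -/
def pd1 (g : ℝ × ℝ → Fin 3 → ℝ) (p : ℝ × ℝ) : Fin 3 → ℝ := fderiv ℝ g p (1, 0)

/-- Partial derivative in the second (`ξ`) direction. -/
def pd2 (g : ℝ × ℝ → Fin 3 → ℝ) (p : ℝ × ℝ) : Fin 3 → ℝ := fderiv ℝ g p (0, 1)

/-- Dini's surface `f(ζ, ξ) = (a cos ζ sin ξ, a sin ζ sin ξ,
a (cos ξ + log tan (ξ/2)) + b ζ)`. -/
def dini (a b : ℝ) : ℝ × ℝ → Fin 3 → ℝ := fun p =>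
  ![a * Real.cos p.1 * Real.sin p.2,
    a * Real.sin p.1 * Real.sin p.2,
    a * (Real.cos p.2 + Real.log (Real.tan (p.2 / 2))) + b * p.1]

def lin1 (d1 d2 : ℝ) : ℝ × ℝ →L[ℝ] ℝ :=
  (ContinuousLinearMap.fst ℝ ℝ ℝ).smulRight d1 + (ContinuousLinearMap.snd ℝ ℝ ℝ).smulRight d2

@[simp] lemma lin1_apply (d1 d2 : ℝ) (z : ℝ × ℝ) : lin1 d1 d2 z = z.1 * d1 + z.2 * d2 := by
  simp [lin1, smul_eq_mul]

def lin2 (v w : Fin 3 → ℝ) : ℝ × ℝ →L[ℝ] (Fin 3 → ℝ) :=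
  ContinuousLinearMap.pi fun i => lin1 (v i) (w i)

@[simp] lemma lin2_apply (v w : Fin 3 → ℝ) (z : ℝ × ℝ) (i : Fin 3) :
    lin2 v w z i = z.1 * v i + z.2 * w i := by simp [lin2]

lemma lin2_fst (v w : Fin 3 → ℝ) : lin2 v w (1, 0) = v := by funext i; simp
lemma lin2_snd (v w : Fin 3 → ℝ) : lin2 v w (0, 1) = w := by funext i; simp

lemma hasFDerivAt_mul2 {φ ψ : ℝ → ℝ} {φ' ψ' : ℝ} (p : ℝ × ℝ)
    (hφ : HasDerivAt φ φ' p.1) (hψ : HasDerivAt ψ ψ' p.2) :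
    HasFDerivAt (fun q : ℝ × ℝ => φ q.1 * ψ q.2) (lin1 (φ' * ψ p.2) (φ p.1 * ψ')) p := by
  have h1 : HasFDerivAt (fun q : ℝ × ℝ => φ q.1) (φ' • ContinuousLinearMap.fst ℝ ℝ ℝ) p :=
    hφ.comp_hasFDerivAt p hasFDerivAt_fst
  have h2 : HasFDerivAt (fun q : ℝ × ℝ => ψ q.2) (ψ' • ContinuousLinearMap.snd ℝ ℝ ℝ) p :=
    hψ.comp_hasFDerivAt p hasFDerivAt_snd
  refine (h1.mul h2).congr_fderiv ?_
  refine ContinuousLinearMap.ext fun z => ?_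
  simp [smul_eq_mul]
  ring

lemma hasFDerivAt_c1 {φ : ℝ → ℝ} {φ' : ℝ} (p : ℝ × ℝ) (hφ : HasDerivAt φ φ' p.1) :
    HasFDerivAt (fun q : ℝ × ℝ => φ q.1) (lin1 φ' 0) p :=
  (hφ.comp_hasFDerivAt p hasFDerivAt_fst).congr_fderiv
    (ContinuousLinearMap.ext fun z => by simp [smul_eq_mul, mul_comm])

lemma hasFDerivAt_c2 {ψ : ℝ → ℝ} {ψ' : ℝ} (p : ℝ × ℝ) (hψ : HasDerivAt ψ ψ' p.2) :
    HasFDerivAt (fun q : ℝ × ℝ => ψ q.2) (lin1 0 ψ') p :=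
  (hψ.comp_hasFDerivAt p hasFDerivAt_snd).congr_fderiv
    (ContinuousLinearMap.ext fun z => by simp [smul_eq_mul, mul_comm])

def G1 (a b : ℝ) (p : ℝ × ℝ) : Fin 3 → ℝ :=
  ![-(a * Real.sin p.1 * Real.sin p.2), a * Real.cos p.1 * Real.sin p.2, b]

def G2 (a : ℝ) (p : ℝ × ℝ) : Fin 3 → ℝ :=
  ![a * Real.cos p.1 * Real.cos p.2, a * Real.sin p.1 * Real.cos p.2,
    a * Real.cos p.2 ^ 2 / Real.sin p.2]

def G11 (a : ℝ) (p : ℝ × ℝ) : Fin 3 → ℝ :=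
  ![-(a * Real.cos p.1 * Real.sin p.2), -(a * Real.sin p.1 * Real.sin p.2), 0]

def G12 (a : ℝ) (p : ℝ × ℝ) : Fin 3 → ℝ :=
  ![-(a * Real.sin p.1 * Real.cos p.2), a * Real.cos p.1 * Real.cos p.2, 0]

def G22 (a : ℝ) (p : ℝ × ℝ) : Fin 3 → ℝ :=
  ![-(a * Real.cos p.1 * Real.sin p.2), -(a * Real.sin p.1 * Real.sin p.2),
    -(a * (2 * Real.sin p.2 ^ 2 * Real.cos p.2 + Real.cos p.2 ^ 3) / Real.sin p.2 ^ 2)]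

-- facts about half angle
lemma half_facts {x : ℝ} (h : Real.sin x ≠ 0) :
    Real.sin (x / 2) ≠ 0 ∧ Real.cos (x / 2) ≠ 0 ∧ Real.tan (x / 2) ≠ 0 := by
  have h2 : Real.sin x = 2 * Real.sin (x / 2) * Real.cos (x / 2) := by
    rw [← Real.sin_two_mul]; congr 1; ring
  rw [h2] at h
  have hs : Real.sin (x / 2) ≠ 0 := fun hh => h (by rw [hh]; ring)
  have hc : Real.cos (x / 2) ≠ 0 := fun hh => h (by rw [hh]; ring)
  exact ⟨hs, hc, by rw [Real.tan_eq_sin_div_cos]; exact div_ne_zero hs hc⟩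

lemma logtan_hasDeriv {x : ℝ} (h : Real.sin x ≠ 0) :
    HasDerivAt (fun t => Real.log (Real.tan (t / 2))) (Real.sin x)⁻¹ x := by
  obtain ⟨hs, hc, ht⟩ := half_facts h
  have h1 : HasDerivAt (fun t : ℝ => t / 2) (1 / 2) x := by
    simpa using (hasDerivAt_id x).div_const 2
  have h2 : HasDerivAt (fun t : ℝ => Real.tan (t / 2)) (1 / Real.cos (x / 2) ^ 2 * (1 / 2)) x :=
    (Real.hasDerivAt_tan hc).comp (h₂ := Real.tan) x h1
  have h3 := (Real.hasDerivAt_log ht).comp x h2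
  refine h3.congr_deriv ?_
  have h4 : Real.sin x = 2 * Real.sin (x / 2) * Real.cos (x / 2) := by
    rw [← Real.sin_two_mul]; congr 1; ring
  rw [h4, Real.tan_eq_sin_div_cos]
  field_simp

lemma dini_hasF (a b : ℝ) (p : ℝ × ℝ) (h : Real.sin p.2 ≠ 0) :
    HasFDerivAt (dini a b) (lin2 (G1 a b p) (G2 a p)) p := by
  rw [show lin2 (G1 a b p) (G2 a p) = ContinuousLinearMap.pi
      (fun i => lin1 (G1 a b p i) (G2 a p i)) from rfl]
  refine hasFDerivAt_pi''  fun i => ?_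
  have hproj : ∀ (v w : Fin 3 → ℝ),
      (ContinuousLinearMap.proj (R := ℝ) (φ := fun _ : Fin 3 => ℝ) i).comp
        (ContinuousLinearMap.pi fun j => lin1 (v j) (w j)) = lin1 (v i) (w i) :=
    fun v w => ContinuousLinearMap.ext fun z => by simp
  rw [hproj]
  fin_cases i
  · have h1 := hasFDerivAt_mul2 p ((Real.hasDerivAt_cos p.1).const_mul a) (Real.hasDerivAt_sin p.2)
    refine (h1.congr_of_eventuallyEq ?_).congr_fderiv ?_
    · exact Filter.Eventually.of_forall fun q => by simp [dini]
    · exact ContinuousLinearMap.ext fun z => by simp [G1, G2]; try ring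
  · have h1 := hasFDerivAt_mul2 p ((Real.hasDerivAt_sin p.1).const_mul a) (Real.hasDerivAt_sin p.2)
    refine (h1.congr_of_eventuallyEq ?_).congr_fderiv ?_
    · exact Filter.Eventually.of_forall fun q => by simp [dini]
    · exact ContinuousLinearMap.ext fun z => by simp [G1, G2]; try ring
  · have hψ : HasDerivAt (fun t => a * (Real.cos t + Real.log (Real.tan (t / 2))))
        (a * (-Real.sin p.2 + (Real.sin p.2)⁻¹)) p.2 :=
      ((Real.hasDerivAt_cos p.2).add (logtan_hasDeriv h)).const_mul a
    have hφ : HasDerivAt (fun t : ℝ => b * t) (b * 1) p.1 := (hasDerivAt_id p.1).const_mul b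
    have h1 := (hasFDerivAt_c2 p hψ).add (hasFDerivAt_c1 p hφ)
    refine (h1.congr_of_eventuallyEq ?_).congr_fderiv ?_
    · exact Filter.Eventually.of_forall fun q => by simp [dini]
    · refine ContinuousLinearMap.ext fun z => ?_
      have hpy := Real.sin_sq_add_cos_sq p.2
      simp [G1, G2]
      field_simp
      linear_combination (-(z.2 * a)) * hpy

lemma G1_hasF (a b : ℝ) (p : ℝ × ℝ) :
    HasFDerivAt (G1 a b) (lin2 (G11 a p) (G12 a p)) p := by
  rw [show lin2 (G11 a p) (G12 a p) = ContinuousLinearMap.pi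
      (fun i => lin1 (G11 a p i) (G12 a p i)) from rfl]
  refine hasFDerivAt_pi'' fun i => ?_
  have hproj : ∀ (v w : Fin 3 → ℝ),
      (ContinuousLinearMap.proj (R := ℝ) (φ := fun _ : Fin 3 => ℝ) i).comp
        (ContinuousLinearMap.pi fun j => lin1 (v j) (w j)) = lin1 (v i) (w i) :=
    fun v w => ContinuousLinearMap.ext fun z => by simp
  rw [hproj]
  fin_cases i
  · have h1 := hasFDerivAt_mul2 p (((Real.hasDerivAt_sin p.1).const_mul a).neg)
      (Real.hasDerivAt_sin p.2)
    refine (h1.congr_of_eventuallyEq ?_).congr_fderiv ?_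
    · exact Filter.Eventually.of_forall fun q => by simp [G1]; try ring
    · exact ContinuousLinearMap.ext fun z => by simp only [lin1_apply, G1, G2, G11, G12, G22, Fin.zero_eta, Fin.mk_one, Fin.reduceFinMk, Matrix.cons_val_zero, Matrix.cons_val_one, Matrix.head_cons, Matrix.cons_val_two, Matrix.tail_cons, Pi.neg_apply]; ring
  · have h1 := hasFDerivAt_mul2 p ((Real.hasDerivAt_cos p.1).const_mul a)
      (Real.hasDerivAt_sin p.2)
    refine (h1.congr_of_eventuallyEq ?_).congr_fderiv ?_
    · exact Filter.Eventually.of_forall fun q => by simp [G1]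
    · exact ContinuousLinearMap.ext fun z => by simp only [lin1_apply, G1, G2, G11, G12, G22, Fin.zero_eta, Fin.mk_one, Fin.reduceFinMk, Matrix.cons_val_zero, Matrix.cons_val_one, Matrix.head_cons, Matrix.cons_val_two, Matrix.tail_cons]; ring
  · refine (hasFDerivAt_const b p).congr_of_eventuallyEq ?_ |>.congr_fderiv ?_
    · exact Filter.Eventually.of_forall fun q => by simp [G1]
    · exact ContinuousLinearMap.ext fun z => by simp only [lin1_apply, G11, G12, Fin.zero_eta, Fin.mk_one, Fin.reduceFinMk, Matrix.cons_val_two, Matrix.tail_cons, Matrix.head_cons, ContinuousLinearMap.zero_apply]; ring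

lemma G2_hasF (a : ℝ) (p : ℝ × ℝ) (h : Real.sin p.2 ≠ 0) :
    HasFDerivAt (G2 a) (lin2 (G12 a p) (G22 a p)) p := by
  rw [show lin2 (G12 a p) (G22 a p) = ContinuousLinearMap.pi
      (fun i => lin1 (G12 a p i) (G22 a p i)) from rfl]
  refine hasFDerivAt_pi'' fun i => ?_
  have hproj : ∀ (v w : Fin 3 → ℝ),
      (ContinuousLinearMap.proj (R := ℝ) (φ := fun _ : Fin 3 => ℝ) i).comp
        (ContinuousLinearMap.pi fun j => lin1 (v j) (w j)) = lin1 (v i) (w i) :=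
    fun v w => ContinuousLinearMap.ext fun z => by simp
  rw [hproj]
  fin_cases i
  · have h1 := hasFDerivAt_mul2 p ((Real.hasDerivAt_cos p.1).const_mul a)
      (Real.hasDerivAt_cos p.2)
    refine (h1.congr_of_eventuallyEq ?_).congr_fderiv ?_
    · exact Filter.Eventually.of_forall fun q => by simp [G2]
    · exact ContinuousLinearMap.ext fun z => by simp only [lin1_apply, G1, G2, G11, G12, G22, Fin.zero_eta, Fin.mk_one, Fin.reduceFinMk, Matrix.cons_val_zero, Matrix.cons_val_one, Matrix.head_cons, Matrix.cons_val_two, Matrix.tail_cons]; ring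
  · have h1 := hasFDerivAt_mul2 p ((Real.hasDerivAt_sin p.1).const_mul a)
      (Real.hasDerivAt_cos p.2)
    refine (h1.congr_of_eventuallyEq ?_).congr_fderiv ?_
    · exact Filter.Eventually.of_forall fun q => by simp [G2]
    · exact ContinuousLinearMap.ext fun z => by simp only [lin1_apply, G1, G2, G11, G12, G22, Fin.zero_eta, Fin.mk_one, Fin.reduceFinMk, Matrix.cons_val_zero, Matrix.cons_val_one, Matrix.head_cons, Matrix.cons_val_two, Matrix.tail_cons]; ring
  · have hnum : HasDerivAt (fun t => a * Real.cos t ^ 2) (a * (2 * Real.cos p.2 ^ 1 * -Real.sin p.2)) p.2 :=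
      ((Real.hasDerivAt_cos p.2).pow 2).const_mul a
    have hψ := hnum.div (Real.hasDerivAt_sin p.2) h
    have h1 := hasFDerivAt_c2 p hψ
    refine (h1.congr_of_eventuallyEq ?_).congr_fderiv ?_
    · exact Filter.Eventually.of_forall fun q => by simp [G2]
    · refine ContinuousLinearMap.ext fun z => ?_
      simp only [lin1_apply, G12, G22, Fin.zero_eta, Fin.mk_one, Fin.reduceFinMk, Matrix.cons_val_two, Matrix.tail_cons, Matrix.head_cons]
      field_simp
      ring

/-- for `a ≠ 0`, `a² + b² = 1`, at every point of `ℝ × (0, π)` with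
`cos ξ ≠ 0`, Dini's surface is immersed and its Gauss curvature equals `−1`. -/
theorem statement16 (a b : ℝ) (ha : a ≠ 0) (hab : a ^ 2 + b ^ 2 = 1)
    (f : ℝ × ℝ → Fin 3 → ℝ) (hf : f = dini a b) :
    ∀ p : ℝ × ℝ, p.2 ∈ Set.Ioo 0 Real.pi → Real.cos p.2 ≠ 0 →
      LinearIndependent ℝ ![pd1 f p, pd2 f p] ∧
      ∀ N : Fin 3 → ℝ,
        N = (Real.sqrt ((pd1 f p ⨯₃ pd2 f p) ⬝ᵥ (pd1 f p ⨯₃ pd2 f p)))⁻¹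
              • (pd1 f p ⨯₃ pd2 f p) →
        ((pd1 (pd1 f) p ⬝ᵥ N) * (pd2 (pd2 f) p ⬝ᵥ N) - (pd1 (pd2 f) p ⬝ᵥ N) ^ 2) /
          ((pd1 f p ⬝ᵥ pd1 f p) * (pd2 f p ⬝ᵥ pd2 f p) - (pd1 f p ⬝ᵥ pd2 f p) ^ 2)
          = -1 := by
  subst hf
  intro p hp hcosp
  have hsin : Real.sin p.2 ≠ 0 := ne_of_gt (Real.sin_pos_of_pos_of_lt_pi hp.1 hp.2)
  have hpy1 := Real.sin_sq_add_cos_sq p.1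
  have hpy2 := Real.sin_sq_add_cos_sq p.2
  have hpd1 : ∀ q : ℝ × ℝ, Real.sin q.2 ≠ 0 → pd1 (dini a b) q = G1 a b q := by
    intro q hq
    rw [pd1, (dini_hasF a b q hq).fderiv, lin2_fst]
  have hpd2 : ∀ q : ℝ × ℝ, Real.sin q.2 ≠ 0 → pd2 (dini a b) q = G2 a q := by
    intro q hq
    rw [pd2, (dini_hasF a b q hq).fderiv, lin2_snd]
  have hmem : {q : ℝ × ℝ | Real.sin q.2 ≠ 0} ∈ nhds p :=
    (IsOpen.mem_nhds (isOpen_ne.preimage (Real.continuous_sin.comp continuous_snd)) hsin)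
  have hev1 : pd1 (dini a b) =ᶠ[nhds p] G1 a b := by
    filter_upwards [hmem] with q hq using hpd1 q hq
  have hev2 : pd2 (dini a b) =ᶠ[nhds p] G2 a := by
    filter_upwards [hmem] with q hq using hpd2 q hq
  have h11 : pd1 (pd1 (dini a b)) p = G11 a p := by
    rw [pd1, hev1.fderiv_eq, (G1_hasF a b p).fderiv, lin2_fst]
  have h12 : pd1 (pd2 (dini a b)) p = G12 a p := by
    rw [pd1, hev2.fderiv_eq, (G2_hasF a p hsin).fderiv, lin2_fst]
  have h22 : pd2 (pd2 (dini a b)) p = G22 a p := by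
    rw [pd2, hev2.fderiv_eq, (G2_hasF a p hsin).fderiv, lin2_snd]
  rw [hpd1 p hsin, hpd2 p hsin, h11, h12, h22]
  constructor
  · rw [LinearIndependent.pair_iff]
    intro s t hst
    have h0 := congrFun hst 0
    have h1 := congrFun hst 1
    simp only [G1, G2, Pi.add_apply, Pi.smul_apply, smul_eq_mul, Matrix.cons_val_zero,
      Matrix.cons_val_one, Matrix.head_cons, Pi.zero_apply] at h0 h1
    have hs0 : s * (a * Real.sin p.2) = 0 := by
      linear_combination Real.cos p.1 * h1 - Real.sin p.1 * h0 - (s * (a * Real.sin p.2)) * hpy1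
    have ht0 : t * (a * Real.cos p.2) = 0 := by
      linear_combination Real.cos p.1 * h0 + Real.sin p.1 * h1 - (t * (a * Real.cos p.2)) * hpy1
    constructor
    · rcases mul_eq_zero.mp hs0 with h | h
      · exact h
      · exact absurd h (mul_ne_zero ha hsin)
    · rcases mul_eq_zero.mp ht0 with h | h
      · exact h
      · exact absurd h (mul_ne_zero ha hcosp)
  · intro N hN
    set s1 := Real.sin p.1
    set c1 := Real.cos p.1
    set s2 := Real.sin p.2
    set c2 := Real.cos p.2
    have hnn : (G1 a b p ⨯₃ G2 a p) ⬝ᵥ (G1 a b p ⨯₃ G2 a p) = (a * c2) ^ 2 := by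
      simp only [cross_apply, dotProduct, Fin.sum_univ_three, G1, G2, Matrix.cons_val_zero,
        Matrix.cons_val_one, Matrix.head_cons, Matrix.cons_val_two, Matrix.tail_cons]
      have hs2 : Real.sin p.2 ≠ 0 := hsin
      field_simp
      linear_combination (c2^2*(a^2*c2^2 + b^2 + a^2*s2^2*(1+s1^2+c1^2))) * hpy1 +
        (c2^2*a^2) * hpy2 + (c2^2) * hab
    have hA : G11 a p ⬝ᵥ (G1 a b p ⨯₃ G2 a p) = -(a^3*s2*c2^2) := by
      simp only [cross_apply, dotProduct, Fin.sum_univ_three, G1, G2, G11, Matrix.cons_val_zero,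
        Matrix.cons_val_one, Matrix.head_cons, Matrix.cons_val_two, Matrix.tail_cons]
      have hs2 : Real.sin p.2 ≠ 0 := hsin
      field_simp
      linear_combination (-(a*s2*c2^2)) * hpy1
    have hB : G22 a p ⬝ᵥ (G1 a b p ⨯₃ G2 a p) = a^3*c2^2/s2 := by
      simp only [cross_apply, dotProduct, Fin.sum_univ_three, G1, G2, G22, Matrix.cons_val_zero,
        Matrix.cons_val_one, Matrix.head_cons, Matrix.cons_val_two, Matrix.tail_cons]
      have hs2 : Real.sin p.2 ≠ 0 := hsin
      field_simp
      linear_combination (a*c2^2*s2*(s2^2+c2^2)) * hpy1 + (a*c2^2*s2) * hpy2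
    have hC : G12 a p ⬝ᵥ (G1 a b p ⨯₃ G2 a p) = a^2*b*c2^2 := by
      simp only [cross_apply, dotProduct, Fin.sum_univ_three, G1, G2, G12, Matrix.cons_val_zero,
        Matrix.cons_val_one, Matrix.head_cons, Matrix.cons_val_two, Matrix.tail_cons]
      have hs2 : Real.sin p.2 ≠ 0 := hsin
      field_simp
      linear_combination (b*c2^2) * hpy1
    have hD : (G1 a b p ⬝ᵥ G1 a b p) * (G2 a p ⬝ᵥ G2 a p) - (G1 a b p ⬝ᵥ G2 a p) ^ 2
        = (a*c2)^2 := by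
      simp only [dotProduct, Fin.sum_univ_three, G1, G2, Matrix.cons_val_zero,
        Matrix.cons_val_one, Matrix.head_cons, Matrix.cons_val_two, Matrix.tail_cons]
      have hs2 : Real.sin p.2 ≠ 0 := hsin
      field_simp
      linear_combination
        (c2^2*s2^2*(a^2*s2^2*(1+s1^2+c1^2) + a^2*c2^2 + b^2)) * hpy1 +
        (c2^2*s2^2*a^2) * hpy2 +
        (c2^2*s2^2) * hab
    have hc0 : |a * c2| ≠ 0 := abs_ne_zero.mpr (mul_ne_zero ha hcosp)
    have hc2 : |a * c2| ^ 2 = (a * c2) ^ 2 := sq_abs _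
    rw [hN, hnn, Real.sqrt_sq_eq_abs]
    simp only [dotProduct_smul, smul_eq_mul]
    rw [hA, hB, hC, hD]
    rw [div_eq_iff (pow_ne_zero 2 (mul_ne_zero ha hcosp))]
    field_simp
    linear_combination (-(a^2*c2^2)) * hab + hc2
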